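/- arXiv:2101.05441 — 4 statements merged into one kernel-verified Lean document; each statement's English description precedes it below -/
import Mathlib

section
/- Let M be an atomic commutative cancellative monoid that is not factorial. Then M is length-factorial if and only if there exists an atom a of M_red such that both A(M_red) \ {a} and { a - b : b in A(M_red) \ {a} } are linearly independent sets over Z in the Grothendieck group of M_red. -/
open Multiset

namespace LF

variable (M : Type*) [CancelCommMonoid M]

/-- `s` is a factorization of the element `b` of the reduced monoid `M_red = Associates M`:
a multiset of atoms of `M_red` whose product is `b`. -/
def IsFactorizationOf (s : Multiset (Associates M)) (b : Associates M) : Prop :=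
  (∀ a ∈ s, Irreducible a) ∧ s.prod = b

/-- The set of factorizations of `x : M`. -/
def FactorsOf (x : M) : Set (Multiset (Associates M)) :=
  {s | IsFactorizationOf M s (Associates.mk x)}

/-- `M` is atomic: every non-unit admits a factorization into atoms. -/
def Atomic : Prop := ∀ x : M, ¬ IsUnit x → (FactorsOf M x).Nonempty

/-- `M` is length-factorial: factorizations of the same element with equal length coincide. -/
def LengthFactorial : Prop :=
  ∀ x : M, ∀ s ∈ FactorsOf M x, ∀ t ∈ FactorsOf M x, card s = card t → s = t

/-- `M` is a factorial (unique factorization) monoid: every element has exactly one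
factorization. -/
def Factorial : Prop := ∀ x : M, ∃! s, s ∈ FactorsOf M x

/-- `(z₁, z₂)` is a factorization relation: two multisets of atoms with the same product. -/
def IsRel (z1 z2 : Multiset (Associates M)) : Prop :=
  (∀ a ∈ z1, Irreducible a) ∧ (∀ a ∈ z2, Irreducible a) ∧ z1.prod = z2.prod

/-- A factorization relation is irredundant if the two sides share no atom. -/
def Irredundant (z1 z2 : Multiset (Associates M)) : Prop := ∀ a, a ∈ z1 → a ∉ z2

/-- Prime element of the reduced monoid. -/
def IsPrimeElem (p : Associates M) : Prop :=
  ¬ IsUnit p ∧ ∀ a b : Associates M, p ∣ a * b → p ∣ a ∨ p ∣ b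

/-- A purely long atom: a non-prime atom which, whenever it appears in an irredundant
unbalanced factorization relation, appears in the longer side. -/
def PurelyLong (a : Associates M) : Prop :=
  Irreducible a ∧ ¬ IsPrimeElem M a ∧
    ∀ z1 z2, IsRel M z1 z2 → Irredundant M z1 z2 → card z1 ≠ card z2 →
      a ∈ z1 → card z2 < card z1

/-- A purely short atom: a non-prime atom which, whenever it appears in an irredundant
unbalanced factorization relation, appears in the shorter side. -/
def PurelyShort (a : Associates M) : Prop :=
  Irreducible a ∧ ¬ IsPrimeElem M a ∧
    ∀ z1 z2, IsRel M z1 z2 → Irredundant M z1 z2 → card z1 ≠ card z2 →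
      a ∈ z1 → card z1 < card z2

/-- A subset `S` of the reduced monoid `M_red` is integrally independent in the Grothendieck
group `gp(M_red)`.  Since `M_red` embeds in `gp(M_red)` (as `M` is cancellative), a `ℤ`-linear
relation `∑ cᵢ sᵢ = 0` in `gp(M_red)`, split into its positive part `p` and negative part `q`,
amounts to an equality `∏ sᵢ ^ pᵢ = ∏ sᵢ ^ qᵢ` in `M_red`. -/
def IntegrallyIndependent (S : Set (Associates M)) : Prop :=
  ∀ (n : ℕ) (g : Fin n → Associates M), Function.Injective g → (∀ i, g i ∈ S) →
    ∀ p q : Fin n → ℕ, (∏ i, g i ^ p i) = (∏ i, g i ^ q i) → p = q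

/-- The set `{a - b : b ∈ S}` (written in the group `gp(M_red)`) is integrally independent:
a relation `∑ cᵢ (bᵢ - a) = 0` in `gp(M_red)`, with `c = p - q`, amounts to the equality
`a ^ (∑ qᵢ) * ∏ bᵢ ^ pᵢ = a ^ (∑ pᵢ) * ∏ bᵢ ^ qᵢ` in `M_red`. -/
def ShiftIntegrallyIndependent (a : Associates M) (S : Set (Associates M)) : Prop :=
  ∀ (n : ℕ) (g : Fin n → Associates M), Function.Injective g → (∀ i, g i ∈ S) →
    ∀ p q : Fin n → ℕ,
      a ^ (∑ i, q i) * ∏ i, g i ^ p i = a ^ (∑ i, p i) * ∏ i, g i ^ q i → p = q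


section Helpers

variable {M}

private lemma assoc_cancel {a b c : Associates M} (h : a * b = a * c) : b = c := by
  obtain ⟨a, rfl⟩ := Associates.mk_surjective a
  obtain ⟨b, rfl⟩ := Associates.mk_surjective b
  obtain ⟨c, rfl⟩ := Associates.mk_surjective c
  rw [Associates.mk_mul_mk, Associates.mk_mul_mk, Associates.mk_eq_mk_iff_associated] at h
  obtain ⟨u, hu⟩ := h
  rw [Associates.mk_eq_mk_iff_associated]
  exact ⟨u, mul_left_cancel (show a * (b * (u : M)) = a * c by rw [← mul_assoc]; exact hu)⟩

private lemma pow_eq_one_imp {a : Associates M} (ha : ¬ IsUnit a) {k : ℕ} (h : a ^ k = 1) :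
    k = 0 := by
  cases k with
  | zero => rfl
  | succ j =>
    exact absurd (isUnit_iff_exists_inv.2 ⟨a ^ j, by rw [← pow_succ']; exact h⟩) ha

private lemma pow_cancel {a : Associates M} (ha : ¬ IsUnit a) {m n : ℕ} (h : a ^ m = a ^ n) :
    m = n := by
  have key : ∀ {i j : ℕ}, i ≤ j → a ^ i = a ^ j → i = j := by
    intro i j hij hh
    have h1 : a ^ i * a ^ (j - i) = a ^ i * 1 := by
      rw [mul_one, ← pow_add, hh]
      congr 1
      omega
    have := pow_eq_one_imp ha (assoc_cancel h1)
    omega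
  rcases le_total m n with hmn | hmn
  · exact key hmn h
  · exact (key hmn h.symm).symm

private lemma prod_ne_one {s : Multiset (Associates M)} (hs : ∀ x ∈ s, Irreducible x)
    (hne : s ≠ 0) : s.prod ≠ 1 := by
  obtain ⟨x, hx⟩ := Multiset.exists_mem_of_ne_zero hne
  intro h
  exact (hs x hx).not_isUnit (isUnit_of_dvd_one (h ▸ Multiset.dvd_prod hx))

private lemma lf_ms (hlf : LengthFactorial M) {s t : Multiset (Associates M)}
    (hs : ∀ x ∈ s, Irreducible x) (ht : ∀ x ∈ t, Irreducible x)
    (hprod : s.prod = t.prod) (hcard : card s = card t) : s = t := by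
  obtain ⟨x, hx⟩ := Associates.mk_surjective s.prod
  exact hlf x s ⟨hs, hx.symm⟩ t ⟨ht, by rw [hx]; exact hprod.symm⟩ hcard

private def msOf {n : ℕ} (g : Fin n → Associates M) (p : Fin n → ℕ) :
    Multiset (Associates M) :=
  ∑ i, Multiset.replicate (p i) (g i)

private lemma prod_msOf {n : ℕ} (g : Fin n → Associates M) (p : Fin n → ℕ) :
    (msOf g p).prod = ∏ i, g i ^ p i := by
  rw [msOf, Multiset.prod_sum]
  exact Finset.prod_congr rfl fun i _ => Multiset.prod_replicate _ _

private lemma card_msOf {n : ℕ} (g : Fin n → Associates M) (p : Fin n → ℕ) :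
    card (msOf g p) = ∑ i, p i := by
  rw [msOf]
  induction (Finset.univ : Finset (Fin n)) using Finset.cons_induction with
  | empty => simp
  | cons a s h ih => simp [Finset.sum_cons, ih]

private lemma count_msOf [DecidableEq (Associates M)] {n : ℕ} {g : Fin n → Associates M}
    (hg : Function.Injective g) (p : Fin n → ℕ) (j : Fin n) :
    count (g j) (msOf g p) = p j := by
  rw [msOf, Multiset.count_sum']
  rw [Finset.sum_eq_single j]
  · rw [Multiset.count_replicate, if_pos rfl]
  · intro i _ hij
    rw [Multiset.count_replicate, if_neg (fun h => hij (hg h))]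
  · intro h
    exact absurd (Finset.mem_univ j) h

private lemma mem_msOf {n : ℕ} {g : Fin n → Associates M} {p : Fin n → ℕ} {x : Associates M}
    (hx : x ∈ msOf g p) : ∃ i, x = g i := by
  rw [msOf, Multiset.mem_sum] at hx
  obtain ⟨i, -, hi⟩ := hx
  exact ⟨i, Multiset.eq_of_mem_replicate hi⟩

private lemma core [DecidableEq (Associates M)] (hlf : LengthFactorial M)
    {z1 z2 w1 w2 : Multiset (Associates M)}
    (hz1 : ∀ x ∈ z1, Irreducible x) (hz2 : ∀ x ∈ z2, Irreducible x)
    (hw1 : ∀ x ∈ w1, Irreducible x) (hw2 : ∀ x ∈ w2, Irreducible x)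
    (hzp : z1.prod = z2.prod) (hwp : w1.prod = w2.prod)
    (hzc : card z1 < card z2) (hwc : card w1 < card w2)
    {a : Associates M} (hcnt : count a z1 ≠ count a z2) (hb1 : a ∉ w1) (hb2 : a ∉ w2) :
    False := by
  set m := card w2 - card w1 with hm
  set n := card z2 - card z1 with hn
  have hmpos : 0 < m := by omega
  have heq : m • z1 + n • w2 = m • z2 + n • w1 := by
    apply lf_ms hlf
    · intro x hx
      rcases Multiset.mem_add.1 hx with h | h
      · exact hz1 x (Multiset.mem_nsmul.1 h).2
      · exact hw2 x (Multiset.mem_nsmul.1 h).2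
    · intro x hx
      rcases Multiset.mem_add.1 hx with h | h
      · exact hz2 x (Multiset.mem_nsmul.1 h).2
      · exact hw1 x (Multiset.mem_nsmul.1 h).2
    · rw [Multiset.prod_add, Multiset.prod_add, Multiset.prod_nsmul, Multiset.prod_nsmul,
        Multiset.prod_nsmul, Multiset.prod_nsmul, hzp, hwp]
    · rw [Multiset.card_add, Multiset.card_add, Multiset.card_nsmul, Multiset.card_nsmul,
        Multiset.card_nsmul, Multiset.card_nsmul]
      have h1 : card z2 = card z1 + n := by omega
      have h2 : card w2 = card w1 + m := by omega
      rw [h1, h2]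
      ring
  have hc := congrArg (count a) heq
  rw [Multiset.count_add, Multiset.count_add, Multiset.count_nsmul, Multiset.count_nsmul,
    Multiset.count_nsmul, Multiset.count_nsmul, Multiset.count_eq_zero_of_notMem hb1,
    Multiset.count_eq_zero_of_notMem hb2] at hc
  have hc' : m * count a z1 = m * count a z2 := by simpa using hc
  exact hcnt (Nat.eq_of_mul_eq_mul_left hmpos hc')

private lemma shift_indep (hlf : LengthFactorial M) {a : Associates M} (ha : Irreducible a) :
    ShiftIntegrallyIndependent M a ({b | Irreducible b} \ {a}) := by
  classical
  intro n g hginj hg p q h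
  have hgi : ∀ i, Irreducible (g i) := fun i => (hg i).1
  have hga : ∀ i, g i ≠ a := fun i hi => (hg i).2 hi
  have heq : Multiset.replicate (∑ i, q i) a + msOf g p
      = Multiset.replicate (∑ i, p i) a + msOf g q := by
    apply lf_ms hlf
    · intro x hx
      rcases Multiset.mem_add.1 hx with hx | hx
      · rw [Multiset.eq_of_mem_replicate hx]; exact ha
      · obtain ⟨i, rfl⟩ := mem_msOf hx; exact hgi i
    · intro x hx
      rcases Multiset.mem_add.1 hx with hx | hx
      · rw [Multiset.eq_of_mem_replicate hx]; exact ha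
      · obtain ⟨i, rfl⟩ := mem_msOf hx; exact hgi i
    · rw [Multiset.prod_add, Multiset.prod_add, Multiset.prod_replicate,
        Multiset.prod_replicate, prod_msOf, prod_msOf]
      exact h
    · rw [Multiset.card_add, Multiset.card_add, Multiset.card_replicate,
        Multiset.card_replicate, card_msOf, card_msOf]
      exact add_comm _ _
  funext j
  have hc := congrArg (count (g j)) heq
  rw [Multiset.count_add, Multiset.count_add, Multiset.count_replicate,
    Multiset.count_replicate, if_neg (fun hh => hga j hh.symm),
    if_neg (fun hh => hga j hh.symm), count_msOf hginj, count_msOf hginj] at hc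
  omega

private lemma int_indep [DecidableEq (Associates M)] (hlf : LengthFactorial M)
    {z1 z2 : Multiset (Associates M)}
    (hz1 : ∀ x ∈ z1, Irreducible x) (hz2 : ∀ x ∈ z2, Irreducible x)
    (hzp : z1.prod = z2.prod) (hzc : card z1 < card z2)
    {a : Associates M} (hcnt : count a z1 ≠ count a z2) :
    IntegrallyIndependent M ({b | Irreducible b} \ {a}) := by
  intro n g hginj hg p q h
  have hgi : ∀ i, Irreducible (g i) := fun i => (hg i).1
  have hga : ∀ i, g i ≠ a := fun i hi => (hg i).2 hi
  have hsplit : (∏ i, g i ^ min (p i) (q i)) * (∏ i, g i ^ (p i - q i))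
      = (∏ i, g i ^ min (p i) (q i)) * (∏ i, g i ^ (q i - p i)) := by
    rw [← Finset.prod_mul_distrib, ← Finset.prod_mul_distrib]
    calc (∏ i, g i ^ min (p i) (q i) * g i ^ (p i - q i)) = ∏ i, g i ^ p i :=
          Finset.prod_congr rfl fun i _ => by
            rw [← pow_add]
            congr 1
            omega
      _ = ∏ i, g i ^ q i := h
      _ = ∏ i, g i ^ min (p i) (q i) * g i ^ (q i - p i) :=
          (Finset.prod_congr rfl fun i _ => by
            rw [← pow_add]
            congr 1
            omega).symm
  have h2 : (∏ i, g i ^ (p i - q i)) = ∏ i, g i ^ (q i - p i) := assoc_cancel hsplit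
  have hwp : (msOf g fun i => p i - q i).prod = (msOf g fun i => q i - p i).prod := by
    rw [prod_msOf, prod_msOf]
    exact h2
  have hw1 : ∀ x ∈ msOf g fun i => p i - q i, Irreducible x := fun x hx => by
    obtain ⟨i, rfl⟩ := mem_msOf hx; exact hgi i
  have hw2 : ∀ x ∈ msOf g fun i => q i - p i, Irreducible x := fun x hx => by
    obtain ⟨i, rfl⟩ := mem_msOf hx; exact hgi i
  have hna1 : a ∉ msOf g fun i => p i - q i := fun hx => by
    obtain ⟨i, hi⟩ := mem_msOf hx; exact hga i hi.symm
  have hna2 : a ∉ msOf g fun i => q i - p i := fun hx => by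
    obtain ⟨i, hi⟩ := mem_msOf hx; exact hga i hi.symm
  rcases Nat.lt_trichotomy (card (msOf g fun i => p i - q i))
      (card (msOf g fun i => q i - p i)) with hlt | hceq | hgt
  · exact (core hlf hz1 hz2 hw1 hw2 hzp hwp hzc hlt hcnt hna1 hna2).elim
  · have hmm := lf_ms hlf hw1 hw2 hwp hceq
    funext j
    have hc := congrArg (count (g j)) hmm
    rw [count_msOf hginj, count_msOf hginj] at hc
    have hc2 : p j - q j = q j - p j := hc
    omega
  · exact (core hlf hz1 hz2 hw2 hw1 hzp hwp.symm hzc hgt hcnt hna2 hna1).elim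

private lemma decomp [DecidableEq (Associates M)] {F : Finset (Associates M)} {n : ℕ}
    (e : Fin n ≃ {x // x ∈ F}) {a : Associates M} (haF : a ∉ F)
    {s : Multiset (Associates M)} (hsub : s.toFinset ⊆ insert a F) :
    s.prod = a ^ s.count a * ∏ i, (e i : Associates M) ^ s.count ((e i : Associates M))
    ∧ card s = s.count a + ∑ i, s.count ((e i : Associates M)) := by
  constructor
  · rw [Finset.prod_multiset_count s]
    rw [Finset.prod_subset hsub (fun x _ hx => by
      rw [Multiset.count_eq_zero_of_notMem (fun hm => hx (Multiset.mem_toFinset.2 hm)),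
        pow_zero])]
    rw [Finset.prod_insert haF]
    congr 1
    rw [← Finset.prod_coe_sort F (fun x => x ^ s.count x)]
    exact (Equiv.prod_comp e (fun x : {x // x ∈ F} => (x : Associates M) ^ s.count (x : Associates M))).symm
  · rw [← Multiset.toFinset_sum_count_eq s]
    rw [Finset.sum_subset hsub (fun x _ hx =>
      Multiset.count_eq_zero_of_notMem (fun hm => hx (Multiset.mem_toFinset.2 hm)))]
    rw [Finset.sum_insert haF]
    congr 1
    rw [← Finset.sum_coe_sort F (fun x => s.count x)]
    exact (Equiv.sum_comp e (fun x : {x // x ∈ F} => s.count ((x : Associates M)))).symm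

end Helpers

/-- An atomic monoid `M` that is not factorial is length-factorial if and
only if there is an atom `a` of `M_red` such that both `A(M_red) \ {a}` and
`a - (A(M_red) \ {a})` are integrally independent in `gp(M_red)`. -/
theorem stmt2 (hat : Atomic M) (hnf : ¬ Factorial M) :
    LengthFactorial M ↔
      ∃ a : Associates M, Irreducible a ∧
        IntegrallyIndependent M ({b | Irreducible b} \ {a}) ∧
        ShiftIntegrallyIndependent M a ({b | Irreducible b} \ {a}) := by
  classical
  constructor
  · -- length-factorial implies the existence of such an atom
    intro hlf
    -- produce two distinct factorizations of some element
    rw [Factorial] at hnf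
    push_neg at hnf
    obtain ⟨x, hx⟩ := hnf
    have hnonempty : (FactorsOf M x).Nonempty := by
      by_cases hu : IsUnit x
      · exact ⟨0, ⟨fun y hy => absurd hy (Multiset.notMem_zero y), by
          rw [Multiset.prod_zero]; exact (Associates.mk_eq_one.2 hu).symm⟩⟩
      · exact hat x hu
    obtain ⟨s0, hs0⟩ := hnonempty
    have hex2 : ∃ t0 ∈ FactorsOf M x, t0 ≠ s0 := by
      by_contra hcon
      push_neg at hcon
      exact hx ⟨s0, hs0, fun y hy => hcon y hy⟩
    obtain ⟨t0, ht0, hts⟩ := hex2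
    obtain ⟨hs0i, hs0p⟩ := hs0
    obtain ⟨ht0i, ht0p⟩ := ht0
    set u : Multiset (Associates M) := s0 ∩ t0 with hu
    set z1 : Multiset (Associates M) := s0 - u with hz1d
    set z2 : Multiset (Associates M) := t0 - u with hz2d
    have hus : u ≤ s0 := by rw [hu]; exact Multiset.inter_le_left
    have hut : u ≤ t0 := by rw [hu]; exact Multiset.inter_le_right
    have hadds : z1 + u = s0 := by
      rw [hz1d]; exact tsub_add_cancel_of_le hus
    have haddt : z2 + u = t0 := by
      rw [hz2d]; exact tsub_add_cancel_of_le hut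
    have hz1i : ∀ y ∈ z1, Irreducible y := fun y hy =>
      hs0i y (by rw [← hadds]; exact Multiset.mem_add.2 (Or.inl hy))
    have hz2i : ∀ y ∈ z2, Irreducible y := fun y hy =>
      ht0i y (by rw [← haddt]; exact Multiset.mem_add.2 (Or.inl hy))
    have hprodeq : z1.prod = z2.prod := by
      have h1 : u.prod * z1.prod = u.prod * z2.prod := by
        rw [mul_comm u.prod, mul_comm u.prod, ← Multiset.prod_add, ← Multiset.prod_add,
          hadds, haddt, hs0p, ht0p]
      exact assoc_cancel h1
    have hz12 : z1 ≠ z2 := by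
      intro hcon
      apply hts
      rw [← haddt, ← hcon, hadds]
    have hz1ne : z1 ≠ 0 := by
      intro h0
      have h1 : z2.prod = 1 := by rw [← hprodeq, h0, Multiset.prod_zero]
      exact prod_ne_one hz2i (fun h0' => hz12 (h0.trans h0'.symm)) h1
    have hz2ne : z2 ≠ 0 := by
      intro h0
      have h1 : z1.prod = 1 := by rw [hprodeq, h0, Multiset.prod_zero]
      exact prod_ne_one hz1i (fun h0' => hz12 (h0'.trans h0.symm)) h1
    have hdisj : ∀ b ∈ z1, b ∉ z2 := by
      intro b hb1 hb2
      rw [hz1d] at hb1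
      rw [hz2d] at hb2
      have h1 := Multiset.count_pos.2 hb1
      have h2 := Multiset.count_pos.2 hb2
      rw [Multiset.count_sub, hu, Multiset.count_inter] at h1 h2
      omega
    have hcardne : card z1 ≠ card z2 := by
      intro hcc
      obtain ⟨b, hb⟩ := Multiset.exists_mem_of_ne_zero hz1ne
      exact hdisj b hb ((lf_ms hlf hz1i hz2i hprodeq hcc) ▸ hb)
    rcases Nat.lt_or_ge (card z1) (card z2) with hlt | hge
    · obtain ⟨b, hb⟩ := Multiset.exists_mem_of_ne_zero hz1ne
      have hcnt : count b z1 ≠ count b z2 := by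
        have h1 : 0 < count b z1 := Multiset.count_pos.2 hb
        have h2 : count b z2 = 0 := Multiset.count_eq_zero_of_notMem (hdisj b hb)
        omega
      exact ⟨b, hz1i b hb, int_indep hlf hz1i hz2i hprodeq hlt hcnt,
        shift_indep hlf (hz1i b hb)⟩
    · have hlt : card z2 < card z1 := by omega
      obtain ⟨b, hb⟩ := Multiset.exists_mem_of_ne_zero hz2ne
      have hcnt : count b z2 ≠ count b z1 := by
        have h1 : 0 < count b z2 := Multiset.count_pos.2 hb
        have h2 : count b z1 = 0 := by
          rw [Multiset.count_eq_zero]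
          intro hb1
          exact hdisj b hb1 hb
        omega
      exact ⟨b, hz2i b hb, int_indep hlf hz2i hz1i hprodeq.symm hlt hcnt,
        shift_indep hlf (hz2i b hb)⟩
  · -- the independence conditions imply length-factoriality
    rintro ⟨a, ha, hint, hshift⟩
    intro x s hsf t htf hcard
    obtain ⟨hsi, hsp⟩ := hsf
    obtain ⟨hti, htp⟩ := htf
    have hprod : s.prod = t.prod := by rw [hsp, htp]
    set F : Finset (Associates M) := (s + t).toFinset \ {a} with hF
    have haF : a ∉ F := by simp [hF]
    have hsubs : s.toFinset ⊆ insert a F := by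
      intro y hy
      by_cases hya : y = a
      · simp [hya]
      · have hyst : y ∈ (s + t).toFinset :=
          Multiset.mem_toFinset.2 (Multiset.mem_add.2 (Or.inl (Multiset.mem_toFinset.1 hy)))
        refine Finset.mem_insert.2 (Or.inr ?_)
        rw [hF]
        exact Finset.mem_sdiff.2 ⟨hyst, by simpa using hya⟩
    have hsubt : t.toFinset ⊆ insert a F := by
      intro y hy
      by_cases hya : y = a
      · simp [hya]
      · have hyst : y ∈ (s + t).toFinset :=
          Multiset.mem_toFinset.2 (Multiset.mem_add.2 (Or.inr (Multiset.mem_toFinset.1 hy)))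
        refine Finset.mem_insert.2 (Or.inr ?_)
        rw [hF]
        exact Finset.mem_sdiff.2 ⟨hyst, by simpa using hya⟩
    set e : Fin F.card ≃ {y // y ∈ F} := F.equivFin.symm with he
    have hginj : Function.Injective (fun i => ((e i : Associates M))) :=
      fun i j hij => e.injective (Subtype.ext hij)
    have hgF : ∀ i, ((e i : Associates M)) ∈ F := fun i => (e i).2
    have hgmem : ∀ i, ((e i : Associates M)) ∈ ({b | Irreducible b} \ {a} : Set (Associates M)) := by
      intro i
      have h1 : ((e i : Associates M)) ∈ (s + t).toFinset \ {a} := by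
        rw [← hF]; exact hgF i
      rw [Finset.mem_sdiff] at h1
      refine ⟨?_, ?_⟩
      · have h2 : ((e i : Associates M)) ∈ s + t := Multiset.mem_toFinset.1 h1.1
        rcases Multiset.mem_add.1 h2 with h3 | h3
        · exact hsi _ h3
        · exact hti _ h3
      · intro h2
        exact h1.2 (by simpa using h2)
    obtain ⟨hsprod, hscard⟩ := decomp e haF hsubs
    obtain ⟨htprod, htcard⟩ := decomp e haF hsubt
    have hL : s.count a + ∑ i, s.count ((e i : Associates M))
        = t.count a + ∑ i, t.count ((e i : Associates M)) := by
      rw [← hscard, ← htcard]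
      exact hcard
    have hkey : a ^ (∑ i, t.count ((e i : Associates M)))
          * ∏ i, ((e i : Associates M)) ^ s.count ((e i : Associates M))
        = a ^ (∑ i, s.count ((e i : Associates M)))
          * ∏ i, ((e i : Associates M)) ^ t.count ((e i : Associates M)) := by
      apply assoc_cancel (a := a ^ (s.count a + ∑ i, s.count ((e i : Associates M))))
      calc a ^ (s.count a + ∑ i, s.count ((e i : Associates M)))
            * (a ^ (∑ i, t.count ((e i : Associates M)))
              * ∏ i, ((e i : Associates M)) ^ s.count ((e i : Associates M)))
          = a ^ ((∑ i, s.count ((e i : Associates M))) + ∑ i, t.count ((e i : Associates M)))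
            * (a ^ s.count a * ∏ i, ((e i : Associates M)) ^ s.count ((e i : Associates M))) := by
            rw [← mul_assoc, ← mul_assoc, ← pow_add, ← pow_add]
            have hee : s.count a + (∑ i, s.count ((e i : Associates M)))
                + ∑ i, t.count ((e i : Associates M))
                = (∑ i, s.count ((e i : Associates M))) + (∑ i, t.count ((e i : Associates M)))
                  + s.count a := by omega
            rw [hee]
        _ = a ^ ((∑ i, s.count ((e i : Associates M))) + ∑ i, t.count ((e i : Associates M)))
            * (a ^ t.count a * ∏ i, ((e i : Associates M)) ^ t.count ((e i : Associates M))) := by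
            rw [← hsprod, ← htprod, hprod]
        _ = a ^ (s.count a + ∑ i, s.count ((e i : Associates M)))
            * (a ^ (∑ i, s.count ((e i : Associates M)))
              * ∏ i, ((e i : Associates M)) ^ t.count ((e i : Associates M))) := by
            rw [← mul_assoc, ← mul_assoc, ← pow_add, ← pow_add]
            have hee : (∑ i, s.count ((e i : Associates M))) + (∑ i, t.count ((e i : Associates M)))
                + t.count a
                = s.count a + (∑ i, s.count ((e i : Associates M)))
                  + ∑ i, s.count ((e i : Associates M)) := by omega
            rw [hee]
    have hpq := hshift F.card (fun i => ((e i : Associates M))) hginj hgmem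
      (fun i => s.count ((e i : Associates M))) (fun i => t.count ((e i : Associates M))) hkey
    have hpq' : ∀ j, s.count ((e j : Associates M)) = t.count ((e j : Associates M)) :=
      fun j => congrFun hpq j
    have hab : s.count a = t.count a := by
      have hps : (∏ i, ((e i : Associates M)) ^ s.count ((e i : Associates M)))
          = ∏ i, ((e i : Associates M)) ^ t.count ((e i : Associates M)) :=
        Finset.prod_congr rfl fun i _ => by rw [hpq' i]
      have h1 : a ^ s.count a * ∏ i, ((e i : Associates M)) ^ s.count ((e i : Associates M))
          = a ^ t.count a * ∏ i, ((e i : Associates M)) ^ s.count ((e i : Associates M)) := by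
        rw [← hsprod, hprod, htprod, hps]
      have h2 : (∏ i, ((e i : Associates M)) ^ s.count ((e i : Associates M))) * a ^ s.count a
          = (∏ i, ((e i : Associates M)) ^ s.count ((e i : Associates M))) * a ^ t.count a := by
        rw [mul_comm, h1, mul_comm]
      exact pow_cancel ha.not_isUnit (assoc_cancel h2)
    ext y
    by_cases hya : y = a
    · rw [hya]
      exact hab
    by_cases hyF : y ∈ F
    · have hgy : ((e (F.equivFin ⟨y, hyF⟩) : Associates M)) = y := by
        rw [he]
        simp
      rw [← hgy]
      exact hpq' (F.equivFin ⟨y, hyF⟩)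
    · have hys : y ∉ s := by
        intro hy
        have := hsubs (Multiset.mem_toFinset.2 hy)
        rcases Finset.mem_insert.1 this with h | h
        · exact hya h
        · exact hyF h
      have hyt : y ∉ t := by
        intro hy
        have := hsubt (Multiset.mem_toFinset.2 hy)
        rcases Finset.mem_insert.1 this with h | h
        · exact hya h
        · exact hyF h
      rw [Multiset.count_eq_zero_of_notMem hys, Multiset.count_eq_zero_of_notMem hyt]


end LF
end

section
/- An atomic monoid M is length-factorial if and only if its equal catenary degree c_eq(M) equals 0. -/
open Multiset

namespace LF

variable (M : Type*) [CancelCommMonoid M]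

/-- The distance between two factorizations: `d(z, z') = max(|z / gcd(z,z')|, |z' / gcd(z,z')|)`,
computed with multiset difference. -/
noncomputable def mdist (s t : Multiset (Associates M)) : ℕ :=
  letI := Classical.decEq (Associates M)
  max (card (s - t)) (card (t - s))

/-- `L` is an `N`-chain of factorizations of `x` from `z` to `z'`. -/
def IsNChainFrom (x : M) (N : ℕ∞) (L : List (Multiset (Associates M)))
    (z z' : Multiset (Associates M)) : Prop :=
  L.head? = some z ∧ L.getLast? = some z' ∧ (∀ w ∈ L, w ∈ FactorsOf M x) ∧
    L.Chain' (fun u v => (mdist M u v : ℕ∞) ≤ N)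

/-- The lengths along the chain `L` are monotone (nondecreasing or nonincreasing). -/
def MonotoneLengths (L : List (Multiset (Associates M))) : Prop :=
  (L.map card).Chain' (· ≤ ·) ∨ (L.map card).Chain' (fun a b => b ≤ a)

/-- The equal catenary degree `c_eq(M)`. -/
noncomputable def cEq : ℕ∞ :=
  ⨆ x : M, sInf {N : ℕ∞ | ∀ z ∈ FactorsOf M x, ∀ z' ∈ FactorsOf M x, card z = card z' →
    ∃ L, IsNChainFrom M x N L z z' ∧ MonotoneLengths M L}
lemma chain_eq_headLast {α : Type*} : ∀ (L : List α), L.Chain' Eq →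
    ∀ z z', L.head? = some z → L.getLast? = some z' → z = z'
  | [], _, z, z', hz, _ => by simp at hz
  | [a], _, z, z', hz, hz' => by
      rw [List.head?_cons, Option.some.injEq] at hz
      rw [List.getLast?_singleton, Option.some.injEq] at hz'
      exact hz.symm.trans hz' 
  | a :: b :: t, h, z, z', hz, hz' => by
      simp only [List.head?, Option.some.injEq] at hz
      replace h := List.isChain_cons_cons.mp h
      have := chain_eq_headLast (b :: t) h.2 b z' rfl
        (by rw [← hz']; exact List.getLast?_cons_cons.symm)
      exact hz ▸ h.1.trans this

lemma mdist_eq_zero {s t : Multiset (Associates M)} (h : mdist M s t = 0) : s = t := by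
  classical
  simp only [mdist, Nat.max_eq_zero_iff, card_eq_zero, tsub_eq_zero_iff_le] at h
  exact le_antisymm h.1 h.2

/-- An atomic monoid is length-factorial if and only if its equal catenary
degree is `0`. -/
theorem stmt5 (hat : Atomic M) : LengthFactorial M ↔ cEq M = 0 := by
  constructor
  · intro hlf
    refine le_antisymm ?_ _root_.zero_le
    rw [cEq]
    refine iSup_le fun x => sInf_le ?_
    intro z hz z' hz' hcard
    obtain rfl := hlf x z hz z' hz' hcard
    refine ⟨[z], ⟨rfl, by simp, by simpa using hz, List.isChain_singleton _⟩,
      Or.inl (List.isChain_singleton _)⟩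
  · intro h x z hz z' hz' hcard
    have hx : sInf {N : ℕ∞ | ∀ z ∈ FactorsOf M x, ∀ z' ∈ FactorsOf M x,
        card z = card z' → ∃ L, IsNChainFrom M x N L z z' ∧ MonotoneLengths M L} = 0 := by
      refine le_antisymm ?_ bot_le
      rw [← h, cEq]
      exact le_iSup (fun x : M => sInf {N : ℕ∞ | ∀ z ∈ FactorsOf M x, ∀ z' ∈ FactorsOf M x,
        card z = card z' → ∃ L, IsNChainFrom M x N L z z' ∧ MonotoneLengths M L}) x
    have h0 : (0 : ℕ∞) ∈ {N : ℕ∞ | ∀ z ∈ FactorsOf M x, ∀ z' ∈ FactorsOf M x,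
        card z = card z' → ∃ L, IsNChainFrom M x N L z z' ∧ MonotoneLengths M L} := by
      by_contra h0
      have h1 : (1 : ℕ∞) ≤ sInf {N : ℕ∞ | ∀ z ∈ FactorsOf M x, ∀ z' ∈ FactorsOf M x,
          card z = card z' → ∃ L, IsNChainFrom M x N L z z' ∧ MonotoneLengths M L} := by
        refine le_sInf fun N hN => ?_
        rcases eq_or_ne N 0 with rfl | hne
        · exact absurd hN h0
        · exact ENat.one_le_iff_ne_zero.mpr hne
      rw [hx] at h1
      exact absurd h1 (by simp)
    obtain ⟨L, ⟨hhead, hlast, _, hchain⟩, _⟩ := h0 z hz z' hz' hcard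
    have hceq : L.Chain' Eq := by
      refine hchain.imp fun u v huv => ?_
      have h2 : mdist M u v ≤ 0 := by exact_mod_cast huv
      have : mdist M u v = 0 := Nat.le_zero.mp h2
      exact mdist_eq_zero M this
    exact chain_eq_headLast L hceq z z' hhead hlast

end LF
end

section
/- If M is a proper length-factorial monoid with master factorization relation (w1,w2), then the catenary degree, the monotone catenary degree, and the adjacent catenary degree of M all equal max(|w1|, |w2|). -/
open Multiset

namespace LF

variable (M : Type*) [CancelCommMonoid M]

/-- `(w₁, w₂)` is a master factorization relation: an irredundant unbalanced factorization
relation such that every irredundant unbalanced factorization relation is of the form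
`(n • w₁, n • w₂)` or `(n • w₂, n • w₁)` for some positive integer `n`. -/
def IsMasterRel (w1 w2 : Multiset (Associates M)) : Prop :=
  IsRel M w1 w2 ∧ Irredundant M w1 w2 ∧ card w1 ≠ card w2 ∧
    ∀ z1 z2, IsRel M z1 z2 → Irredundant M z1 z2 → card z1 ≠ card z2 →
      ∃ n : ℕ, 0 < n ∧ ((z1 = n • w1 ∧ z2 = n • w2) ∨ (z1 = n • w2 ∧ z2 = n • w1))
/-- The catenary degree `c(M)`. -/
noncomputable def cCat : ℕ∞ :=
  ⨆ x : M, sInf {N : ℕ∞ | ∀ z ∈ FactorsOf M x, ∀ z' ∈ FactorsOf M x,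
    ∃ L, IsNChainFrom M x N L z z'}

/-- The monotone catenary degree `c_mon(M)`. -/
noncomputable def cMon : ℕ∞ :=
  ⨆ x : M, sInf {N : ℕ∞ | ∀ z ∈ FactorsOf M x, ∀ z' ∈ FactorsOf M x,
    ∃ L, IsNChainFrom M x N L z z' ∧ MonotoneLengths M L}

/-- The set of lengths `L(x)`. -/
def lengthsOf (x : M) : Set ℕ := {n | ∃ z ∈ FactorsOf M x, card z = n}

/-- The distance between two sets of factorizations. -/
noncomputable def setDist (Z1 Z2 : Set (Multiset (Associates M))) : ℕ∞ :=
  ⨅ z1 ∈ Z1, ⨅ z2 ∈ Z2, (mdist M z1 z2 : ℕ∞)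

/-- The adjacent catenary degree `c_adj(M)`. -/
noncomputable def cAdj : ℕ∞ :=
  ⨆ x : M, sSup {d : ℕ∞ | ∃ k ℓ : ℕ, k ∈ lengthsOf M x ∧ ℓ ∈ lengthsOf M x ∧ k < ℓ ∧
    (∀ j, k < j → j < ℓ → j ∉ lengthsOf M x) ∧
    d = setDist M {z ∈ FactorsOf M x | card z = k} {z ∈ FactorsOf M x | card z = ℓ}}


section Aux

variable {N : Type*} [CancelCommMonoid N]

theorem aux_cancel {a b c : Associates N} (h : a * b = a * c) : b = c := by
  obtain ⟨a, rfl⟩ := Associates.mk_surjective a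
  obtain ⟨b, rfl⟩ := Associates.mk_surjective b
  obtain ⟨c, rfl⟩ := Associates.mk_surjective c
  rw [Associates.mk_mul_mk, Associates.mk_mul_mk, Associates.mk_eq_mk_iff_associated] at h
  rw [Associates.mk_eq_mk_iff_associated]
  obtain ⟨u, hu⟩ := h
  exact ⟨u, mul_left_cancel (by rw [← mul_assoc]; exact hu)⟩

theorem aux_prod_one {s : Multiset (Associates N)}
    (hs : ∀ a ∈ s, Irreducible a) (h : s.prod = 1) : s = 0 := by
  by_contra hne
  obtain ⟨a, ha⟩ := Multiset.exists_mem_of_ne_zero hne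
  obtain ⟨t, rfl⟩ := Multiset.exists_cons_of_mem ha
  rw [Multiset.prod_cons] at h
  exact (hs a (Multiset.mem_cons_self a t)).not_isUnit (IsUnit.of_mul_eq_one _ h)

theorem aux_nonzero {w1 w2 : Multiset (Associates N)} (hw : IsMasterRel N w1 w2) :
    w1 ≠ 0 ∧ w2 ≠ 0 := by
  obtain ⟨⟨ha1, ha2, hp⟩, _, hcard, _⟩ := hw
  constructor
  · rintro rfl
    rw [Multiset.prod_zero] at hp
    rw [aux_prod_one ha2 hp.symm] at hcard
    exact hcard rfl
  · rintro rfl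
    rw [Multiset.prod_zero] at hp
    rw [aux_prod_one ha1 hp] at hcard
    exact hcard rfl

/-- Key structural lemma: two distinct factorizations of the same element differ exactly by
`n` copies of the master relation. -/
theorem aux_key (hlf : LengthFactorial N) {w1 w2 : Multiset (Associates N)}
    (hw : IsMasterRel N w1 w2) {x : N} {z z' : Multiset (Associates N)}
    (hz : z ∈ FactorsOf N x) (hz' : z' ∈ FactorsOf N x) (hne : z ≠ z') :
    ∃ n : ℕ, ∃ g : Multiset (Associates N), 0 < n ∧
      ((z = g + n • w1 ∧ z' = g + n • w2) ∨ (z = g + n • w2 ∧ z' = g + n • w1)) := by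
  letI := Classical.decEq (Associates N)
  obtain ⟨hz1, hz2⟩ := hz
  obtain ⟨hz'1, hz'2⟩ := hz'
  have h1 : (z - z') + z ∩ z' = z := Multiset.sub_add_inter z z'
  have h2 : (z' - z) + z' ∩ z = z' := Multiset.sub_add_inter z' z
  have hrel : IsRel N (z - z') (z' - z) := by
    refine ⟨fun a ha => hz1 a (Multiset.mem_of_le tsub_le_self ha),
            fun a ha => hz'1 a (Multiset.mem_of_le tsub_le_self ha), ?_⟩
    have hkey : (z ∩ z').prod * (z - z').prod = (z ∩ z').prod * (z' - z).prod := by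
      rw [mul_comm ((z ∩ z').prod) ((z - z').prod), mul_comm ((z ∩ z').prod) ((z' - z).prod)]
      calc (z - z').prod * (z ∩ z').prod = z.prod := by rw [← Multiset.prod_add, h1]
        _ = z'.prod := by rw [hz2, hz'2]
        _ = (z' - z).prod * (z ∩ z').prod := by
              rw [Multiset.inter_comm z z', ← Multiset.prod_add, h2]
    exact aux_cancel hkey
  have hirr : Irredundant N (z - z') (z' - z) := by
    intro a ha hb
    have ha' : 0 < Multiset.count a (z - z') := Multiset.count_pos.mpr ha
    have hb' : 0 < Multiset.count a (z' - z) := Multiset.count_pos.mpr hb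
    rw [Multiset.count_sub] at ha' hb'
    omega
  have hcard : Multiset.card (z - z') ≠ Multiset.card (z' - z) := by
    intro hc
    apply hne
    apply hlf x z ⟨hz1, hz2⟩ z' ⟨hz'1, hz'2⟩
    have e1 := congrArg Multiset.card h1
    have e2 := congrArg Multiset.card h2
    rw [Multiset.card_add] at e1 e2
    rw [Multiset.inter_comm z' z] at e2
    omega
  obtain ⟨n, hn, hc⟩ := hw.2.2.2 _ _ hrel hirr hcard
  refine ⟨n, z ∩ z', hn, ?_⟩
  rcases hc with ⟨e1, e2⟩ | ⟨e1, e2⟩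
  · left
    constructor
    · rw [← e1, add_comm (z ∩ z')]; exact h1.symm
    · rw [← e2, add_comm (z ∩ z'), Multiset.inter_comm z z']; exact h2.symm
  · right
    constructor
    · rw [← e1, add_comm (z ∩ z')]; exact h1.symm
    · rw [← e2, add_comm (z ∩ z'), Multiset.inter_comm z z']; exact h2.symm

theorem aux_mdist_add (g s t : Multiset (Associates N)) (hdisj : ∀ a, a ∈ s → a ∉ t) :
    mdist N (g + t) (g + s) = max (Multiset.card t) (Multiset.card s) := by
  letI := Classical.decEq (Associates N)
  have hd : ∀ a : Associates N, Multiset.count a s = 0 ∨ Multiset.count a t = 0 := by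
    intro a
    by_cases h : a ∈ s
    · exact Or.inr (Multiset.count_eq_zero_of_notMem (hdisj a h))
    · exact Or.inl (Multiset.count_eq_zero_of_notMem h)
  have h1 : (g + t) - (g + s) = t := by
    ext a
    have := hd a
    simp only [Multiset.count_sub, Multiset.count_add]
    omega
  have h2 : (g + s) - (g + t) = s := by
    ext a
    have := hd a
    simp only [Multiset.count_sub, Multiset.count_add]
    omega
  show max (Multiset.card ((g + t) - (g + s))) (Multiset.card ((g + s) - (g + t))) = _
  rw [h1, h2]

theorem aux_mem_factors {x : N} {g A B : Multiset (Associates N)} {n : ℕ}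
    (hz : g + n • A ∈ FactorsOf N x) (hB : ∀ a ∈ B, Irreducible a)
    (hAB : A.prod = B.prod) (hn : 1 ≤ n) :
    g + (n - 1) • A + B ∈ FactorsOf N x := by
  obtain ⟨hz1, hz2⟩ := hz
  constructor
  · intro a ha
    rcases Multiset.mem_add.mp ha with ha | ha
    · rcases Multiset.mem_add.mp ha with ha | ha
      · exact hz1 a (Multiset.mem_add.mpr (Or.inl ha))
      · obtain ⟨hne, ha⟩ := Multiset.mem_nsmul.mp ha
        exact hz1 a (Multiset.mem_add.mpr (Or.inr (Multiset.mem_nsmul.mpr ⟨by omega, ha⟩)))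
    · exact hB a ha
  · have : (g + (n - 1) • A + B).prod = (g + n • A).prod := by
      simp only [Multiset.prod_add, Multiset.prod_nsmul, ← hAB]
      rw [mul_assoc, ← pow_succ, Nat.sub_add_cancel hn]
    rw [this]
    exact hz2

/-- Chain construction: a monotone `max(|s|,|t|)`-chain from `g + n•t` to `g + n•s`. -/
theorem aux_chain {x : N} {g s t : Multiset (Associates N)} (n : ℕ)
    (hz : g + n • t ∈ FactorsOf N x) (hs : ∀ a ∈ s, Irreducible a)
    (hprod : s.prod = t.prod) (hdisj : ∀ a, a ∈ s → a ∉ t) :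
    ∃ L, IsNChainFrom N x ((max (Multiset.card s) (Multiset.card t) : ℕ) : ℕ∞) L
        (g + n • t) (g + n • s) ∧ MonotoneLengths N L := by
  letI := Classical.decEq (Associates N)
  set f : ℕ → Multiset (Associates N) := fun k => g + (n - k) • t + k • s with hf
  have hf0 : f 0 = g + n • t := by simp [hf]
  have hfn : f n = g + n • s := by simp [hf]
  have hmem : ∀ k, k ≤ n → f k ∈ FactorsOf N x := by
    intro k hk
    obtain ⟨hz1, hz2⟩ := hz
    constructor
    · intro a ha
      rcases Multiset.mem_add.mp ha with ha | ha
      · rcases Multiset.mem_add.mp ha with ha | ha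
        · exact hz1 a (Multiset.mem_add.mpr (Or.inl ha))
        · obtain ⟨hne, ha⟩ := Multiset.mem_nsmul.mp ha
          exact hz1 a (Multiset.mem_add.mpr (Or.inr (Multiset.mem_nsmul.mpr ⟨by omega, ha⟩)))
      · exact hs a (Multiset.mem_nsmul.mp ha).2
    · have : (f k).prod = (g + n • t).prod := by
        rw [hf]
        simp only [Multiset.prod_add, Multiset.prod_nsmul, hprod]
        rw [mul_assoc, ← pow_add, Nat.sub_add_cancel hk]
      rw [this]
      exact hz2
  have hsplit : ∀ k, k < n → f k = (g + (n - (k + 1)) • t + k • s) + t := by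
    intro k hk
    have e : (n - k) • t = (n - (k + 1)) • t + t := by
      rw [← succ_nsmul]
      congr 1
      omega
    rw [hf]
    simp only
    rw [e]
    abel
  have hsplit' : ∀ k, k < n → f (k + 1) = (g + (n - (k + 1)) • t + k • s) + s := by
    intro k _
    rw [hf]
    simp only
    rw [succ_nsmul]
    abel
  have hstep : ∀ k, k < n → f k - t + s = f (k + 1) := by
    intro k hk
    rw [hsplit k hk, add_tsub_cancel_right, hsplit' k hk]
  have htle : ∀ k, k < n → t ≤ f k := by
    intro k hk
    rw [hsplit k hk]
    exact le_add_self
  refine ⟨(List.range (n + 1)).map f, ⟨?_, ?_, ?_, ?_⟩, ?_⟩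
  · rw [List.range_succ_eq_map, List.map_cons, List.head?_cons, hf0]
  · rw [List.range_succ, List.map_append, List.map_cons, List.map_nil, List.getLast?_concat, hfn]
  · intro w hw'
    rw [List.mem_map] at hw'
    obtain ⟨k, hk, rfl⟩ := hw'
    exact hmem k (by rw [List.mem_range] at hk ; omega)
  · change List.IsChain _ _
    rw [List.isChain_map]
    rw [show n + 1 = n.succ from rfl, List.isChain_range_succ]
    intro m hm
    have hd : mdist N (f m) (f (m + 1)) = max (Multiset.card t) (Multiset.card s) := by
      rw [← hstep m hm]
      have h2 : f m - t + s = (f m - t) + s := rfl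
      have h3 : f m = (f m - t) + t := (tsub_add_cancel_of_le (htle m hm)).symm
      rw [h2]
      nth_rewrite 1 [h3]
      exact aux_mdist_add (f m - t) s t hdisj
    rw [hd, max_comm]
  · have hcards : ∀ k, k < n →
        Multiset.card (f k) = Multiset.card (g + (n - (k + 1)) • t + k • s) + Multiset.card t ∧
        Multiset.card (f (k + 1)) =
          Multiset.card (g + (n - (k + 1)) • t + k • s) + Multiset.card s := by
      intro k hk
      constructor
      · rw [hsplit k hk, Multiset.card_add]
      · rw [hsplit' k hk, Multiset.card_add]
    rcases le_total (Multiset.card s) (Multiset.card t) with h | h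
    · right
      change List.IsChain _ _
      rw [List.map_map, List.isChain_map, show n + 1 = n.succ from rfl, List.isChain_range_succ]
      intro m hm
      obtain ⟨e1, e2⟩ := hcards m hm
      simp only [Function.comp_apply, Nat.succ_eq_add_one]
      omega
    · left
      change List.IsChain _ _
      rw [List.map_map, List.isChain_map, show n + 1 = n.succ from rfl, List.isChain_range_succ]
      intro m hm
      obtain ⟨e1, e2⟩ := hcards m hm
      simp only [Function.comp_apply, Nat.succ_eq_add_one]
      omega

theorem aux_exists_adjacent {α : Type*} (R : α → α → Prop) :
    ∀ (L : List α) (a b : α), L.Chain' R → L.head? = some a → L.getLast? = some b → a ≠ b →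
      ∃ u v, u ∈ L ∧ v ∈ L ∧ u ≠ v ∧ R u v
  | [], a, b, _, ha, _, _ => by simp at ha
  | [x], a, b, _, ha, hb, hne => by
      simp only [List.head?_cons, Option.some_inj] at ha
      simp only [List.getLast?_singleton, Option.some_inj] at hb
      exact absurd (ha.symm.trans hb) hne
  | x :: y :: L, a, b, hch, ha, hb, hne => by
      rw [List.head?_cons, Option.some_inj] at ha
      subst ha
      by_cases hxy : x = y
      · subst hxy
        have hb' : (x :: L).getLast? = some b := by rwa [List.getLast?_cons_cons] at hb
        obtain ⟨u, v, hu, hv, huv, hR⟩ :=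
          aux_exists_adjacent R (x :: L) x b hch.tail rfl hb' hne
        exact ⟨u, v, List.mem_cons_of_mem _ hu, List.mem_cons_of_mem _ hv, huv, hR⟩
      · exact ⟨x, y, by simp, by simp, hxy, (List.isChain_cons_cons.mp hch).1⟩

/-- Over the element `x0` whose class is `w1.prod`, the factorizations are exactly `w1, w2`. -/
theorem aux_factors_eq (hlf : LengthFactorial N) {w1 w2 : Multiset (Associates N)}
    (hw : IsMasterRel N w1 w2) {x0 : N} (hx0 : Associates.mk x0 = w1.prod) :
    FactorsOf N x0 = {w1, w2} := by
  have hw1mem : w1 ∈ FactorsOf N x0 := ⟨hw.1.1, hx0.symm⟩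
  have hw2mem : w2 ∈ FactorsOf N x0 := ⟨hw.1.2.1, by rw [← hw.1.2.2]; exact hx0.symm⟩
  ext z
  constructor
  · intro hz
    by_cases h1 : z = w1
    · exact Or.inl h1
    · obtain ⟨n, g, hn, hc⟩ := aux_key hlf hw hz hw1mem h1
      rcases hc with ⟨e1, e2⟩ | ⟨e1, e2⟩
      · exfalso
        obtain ⟨a, ha⟩ := Multiset.exists_mem_of_ne_zero (aux_nonzero hw).2
        have : a ∈ w1 := by
          rw [e2]
          exact Multiset.mem_add.mpr (Or.inr (Multiset.mem_nsmul.mpr ⟨by omega, ha⟩))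
        exact hw.2.1 a this ha
      · right
        have hc1 : 0 < Multiset.card w1 := Multiset.card_pos.mpr (aux_nonzero hw).1
        have ecard := congrArg Multiset.card e2
        rw [Multiset.card_add, Multiset.card_nsmul] at ecard
        have hnc : Multiset.card w1 ≤ n * Multiset.card w1 := Nat.le_mul_of_pos_left _ hn
        have hg : Multiset.card g = 0 := by omega
        have hn1 : n = 1 := by
          have : n * Multiset.card w1 = 1 * Multiset.card w1 := by omega
          exact Nat.eq_of_mul_eq_mul_right hc1 this
        rw [Multiset.card_eq_zero] at hg
        rw [e1, hg, hn1, one_nsmul, zero_add]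
        exact Set.mem_singleton _
  · intro hz
    rcases hz with rfl | hz
    · exact hw1mem
    · rw [Set.mem_singleton_iff] at hz
      subst hz
      exact hw2mem

end Aux

/-- If `M` is a proper length-factorial monoid with master factorization
relation `(w₁, w₂)`, then the catenary degree, the monotone catenary degree and the adjacent
catenary degree of `M` all equal `max(|w₁|, |w₂|)`. -/
theorem stmt6 (hat : Atomic M) (hlf : LengthFactorial M) (hnf : ¬ Factorial M)
    (w1 w2 : Multiset (Associates M)) (hw : IsMasterRel M w1 w2) :
    cCat M = (max (card w1) (card w2) : ℕ) ∧
      cMon M = (max (card w1) (card w2) : ℕ) ∧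
      cAdj M = (max (card w1) (card w2) : ℕ) := by
  clear hat hnf
  obtain ⟨x0, hx0⟩ := Associates.mk_surjective w1.prod
  have hfac := aux_factors_eq hlf hw hx0
  have hw1mem : w1 ∈ FactorsOf M x0 := ⟨hw.1.1, hx0.symm⟩
  have hw2mem : w2 ∈ FactorsOf M x0 := ⟨hw.1.2.1, by rw [← hw.1.2.2]; exact hx0.symm⟩
  have hw12 : w1 ≠ w2 := fun h => hw.2.2.1 (by rw [h])
  have hdisj12 : ∀ a, a ∈ w1 → a ∉ w2 := hw.2.1
  have hdisj21 : ∀ a, a ∈ w2 → a ∉ w1 := fun a h2 h1 => hw.2.1 a h1 h2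
  set D : ℕ := max (card w1) (card w2) with hD
  have hmd : mdist M w1 w2 = D := by
    have := aux_mdist_add 0 w2 w1 hdisj21
    simpa using this
  have hmd' : mdist M w2 w1 = D := by
    have := aux_mdist_add 0 w1 w2 hdisj12
    simpa [hD, max_comm] using this
  -- upper bound: monotone D-chains always exist
  have hUB : ∀ x : M, ∀ z ∈ FactorsOf M x, ∀ z' ∈ FactorsOf M x,
      ∃ L, IsNChainFrom M x (D : ℕ∞) L z z' ∧ MonotoneLengths M L := by
    intro x z hz z' hz'
    by_cases hne : z = z'
    · subst hne
      refine ⟨[z], ⟨rfl, by simp, ?_, List.isChain_singleton _⟩, Or.inl (List.isChain_singleton _)⟩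
      intro w hw'
      rw [List.mem_singleton] at hw'
      subst hw'
      exact hz
    · obtain ⟨n, g, hn, hc⟩ := aux_key hlf hw hz hz' hne
      rcases hc with ⟨e1, e2⟩ | ⟨e1, e2⟩
      · obtain ⟨L, hL, hM⟩ := aux_chain n (e1 ▸ hz) hw.1.2.1 hw.1.2.2.symm hdisj21
        rw [← e1, ← e2, max_comm (card w2) (card w1)] at hL
        exact ⟨L, hL, hM⟩
      · obtain ⟨L, hL, hM⟩ := aux_chain n (e1 ▸ hz) hw.1.1 hw.1.2.2 hdisj12
        rw [← e1, ← e2] at hL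
        exact ⟨L, hL, hM⟩
  -- lower bound via x0
  have hLBstep : ∀ N' : ℕ∞, (∀ z ∈ FactorsOf M x0, ∀ z' ∈ FactorsOf M x0,
      ∃ L, IsNChainFrom M x0 N' L z z') → (D : ℕ∞) ≤ N' := by
    intro N' hN'
    obtain ⟨L, hhead, hlast, hmemL, hchain⟩ := hN' w1 hw1mem w2 hw2mem
    obtain ⟨u, v, hu, hv, huv, hR⟩ := aux_exists_adjacent _ L w1 w2 hchain hhead hlast hw12
    have hu' : u = w1 ∨ u = w2 := by
      have := hmemL u hu; rw [hfac] at this; simpa using this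
    have hv' : v = w1 ∨ v = w2 := by
      have := hmemL v hv; rw [hfac] at this; simpa using this
    rcases hu' with rfl | rfl <;> rcases hv' with rfl | rfl
    · exact absurd rfl huv
    · rw [← hmd]; exact hR
    · rw [← hmd']; exact hR
    · exact absurd rfl huv
  have hcat : cCat M = (D : ℕ∞) := by
    apply le_antisymm
    · unfold cCat
      apply iSup_le
      intro x
      apply sInf_le
      simp only [Set.mem_setOf_eq]
      intro z hz z' hz'
      obtain ⟨L, hL, _⟩ := hUB x z hz z' hz'
      exact ⟨L, hL⟩
    · unfold cCat
      refine le_trans ?_ (le_iSup _ x0)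
      apply le_sInf
      intro N' hN'
      exact hLBstep N' hN'
  have hmon : cMon M = (D : ℕ∞) := by
    apply le_antisymm
    · unfold cMon
      apply iSup_le
      intro x
      apply sInf_le
      simp only [Set.mem_setOf_eq]
      intro z hz z' hz'
      exact hUB x z hz z' hz'
    · unfold cMon
      refine le_trans ?_ (le_iSup _ x0)
      apply le_sInf
      intro N' hN'
      exact hLBstep N' (fun z hz z' hz' => ((hN' z hz z' hz').imp (fun L h => h.1)))
  have hadjUB : cAdj M ≤ (D : ℕ∞) := by
    unfold cAdj
    apply iSup_le
    intro x
    apply sSup_le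
    rintro d ⟨k, l, hk, hl, hkl, hadj, rfl⟩
    obtain ⟨zk, hzk, hck⟩ := hk
    obtain ⟨zl, hzl, hcl⟩ := hl
    have hne : zk ≠ zl := by intro h; rw [h] at hck; omega
    obtain ⟨n, g, hn, hc⟩ := aux_key hlf hw hzk hzl hne
    have main : ∀ A B : Multiset (Associates M),
        ((A = w1 ∧ B = w2) ∨ (A = w2 ∧ B = w1)) →
        zk = g + n • A → zl = g + n • B → mdist M zk zl = D := by
      intro A B hABperm eA eB
      have hBatoms : ∀ a ∈ B, Irreducible a := by
        rcases hABperm with ⟨rfl, rfl⟩ | ⟨rfl, rfl⟩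
        exacts [hw.1.2.1, hw.1.1]
      have hABprod : A.prod = B.prod := by
        rcases hABperm with ⟨rfl, rfl⟩ | ⟨rfl, rfl⟩
        exacts [hw.1.2.2, hw.1.2.2.symm]
      have hdisjBA : ∀ a, a ∈ B → a ∉ A := by
        rcases hABperm with ⟨rfl, rfl⟩ | ⟨rfl, rfl⟩
        exacts [hdisj21, hdisj12]
      have hmaxAB : max (card A) (card B) = D := by
        rcases hABperm with ⟨rfl, rfl⟩ | ⟨rfl, rfl⟩
        exacts [rfl, max_comm _ _]
      have hn1 : n = 1 := by
        by_contra hne1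
        obtain ⟨m, rfl⟩ : ∃ m, n = m + 1 := ⟨n - 1, by omega⟩
        have hmm : 1 ≤ m := by omega
        have hmid : g + m • A + B ∈ FactorsOf M x := by
          have := aux_mem_factors (eA ▸ hzk) hBatoms hABprod (by omega)
          simpa using this
        have ek : card g + (m + 1) * card A = k := by
          rw [← hck, eA, Multiset.card_add, Multiset.card_nsmul]
        have el : card g + (m + 1) * card B = l := by
          rw [← hcl, eB, Multiset.card_add, Multiset.card_nsmul]
        have hABlt : card A < card B := by
          by_contra hba
          push_neg at hba
          have := Nat.mul_le_mul_left (m + 1) hba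
          omega
        have hmlt : m * card A < m * card B := by
          exact mul_lt_mul_of_pos_left hABlt (by omega)
        have ej : card (g + m • A + B) = card g + m * card A + card B := by
          rw [Multiset.card_add, Multiset.card_add, Multiset.card_nsmul]
        have e5 : (m + 1) * card A = m * card A + card A := Nat.succ_mul _ _
        have e6 : (m + 1) * card B = m * card B + card B := Nat.succ_mul _ _
        refine hadj (card (g + m • A + B)) (by omega) (by omega) ⟨_, hmid, rfl⟩
      subst hn1
      rw [eA, eB, one_nsmul, one_nsmul, aux_mdist_add g B A hdisjBA, hmaxAB]
    have h1 : mdist M zk zl = D := by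
      rcases hc with ⟨e1, e2⟩ | ⟨e1, e2⟩
      exacts [main w1 w2 (Or.inl ⟨rfl, rfl⟩) e1 e2, main w2 w1 (Or.inr ⟨rfl, rfl⟩) e1 e2]
    refine le_trans (le_trans (iInf₂_le zk ⟨hzk, hck⟩) (iInf₂_le zl ⟨hzl, hcl⟩)) ?_
    rw [h1]
  have hadjLB : (D : ℕ∞) ≤ cAdj M := by
    unfold cAdj
    refine le_trans ?_ (le_iSup _ x0)
    apply le_sSup
    have hc12 : card w1 ≠ card w2 := hw.2.2.1
    rcases Nat.lt_or_ge (card w1) (card w2) with hlt | hge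
    · refine ⟨card w1, card w2, ⟨w1, hw1mem, rfl⟩, ⟨w2, hw2mem, rfl⟩, hlt, ?_, ?_⟩
      · rintro j hj1 hj2 ⟨z, hz, rfl⟩
        rw [hfac] at hz
        rcases hz with rfl | hz
        · exact absurd hj1 (lt_irrefl _)
        · rw [Set.mem_singleton_iff] at hz; subst hz; exact absurd hj2 (lt_irrefl _)
      · have hZ1 : {z ∈ FactorsOf M x0 | card z = card w1} = {w1} := by
          ext z
          simp only [Set.mem_sep_iff, hfac, Set.mem_insert_iff, Set.mem_singleton_iff]
          constructor
          · rintro ⟨rfl | rfl, hcz⟩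
            · rfl
            · exact absurd hcz (by omega)
          · rintro rfl; exact ⟨Or.inl rfl, rfl⟩
        have hZ2 : {z ∈ FactorsOf M x0 | card z = card w2} = {w2} := by
          ext z
          simp only [Set.mem_sep_iff, hfac, Set.mem_insert_iff, Set.mem_singleton_iff]
          constructor
          · rintro ⟨rfl | rfl, hcz⟩
            · exact absurd hcz (by omega)
            · rfl
          · rintro rfl; exact ⟨Or.inr rfl, rfl⟩
        rw [hZ1, hZ2]
        have : setDist M {w1} ({w2} : Set _) = (mdist M w1 w2 : ℕ∞) := by
          simp [setDist]
        rw [this, hmd]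
    · have hlt : card w2 < card w1 := by omega
      refine ⟨card w2, card w1, ⟨w2, hw2mem, rfl⟩, ⟨w1, hw1mem, rfl⟩, hlt, ?_, ?_⟩
      · rintro j hj1 hj2 ⟨z, hz, rfl⟩
        rw [hfac] at hz
        rcases hz with rfl | hz
        · exact absurd hj2 (lt_irrefl _)
        · rw [Set.mem_singleton_iff] at hz; subst hz; exact absurd hj1 (lt_irrefl _)
      · have hZ1 : {z ∈ FactorsOf M x0 | card z = card w2} = {w2} := by
          ext z
          simp only [Set.mem_sep_iff, hfac, Set.mem_insert_iff, Set.mem_singleton_iff]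
          constructor
          · rintro ⟨rfl | rfl, hcz⟩
            · exact absurd hcz (by omega)
            · rfl
          · rintro rfl; exact ⟨Or.inr rfl, rfl⟩
        have hZ2 : {z ∈ FactorsOf M x0 | card z = card w1} = {w1} := by
          ext z
          simp only [Set.mem_sep_iff, hfac, Set.mem_insert_iff, Set.mem_singleton_iff]
          constructor
          · rintro ⟨rfl | rfl, hcz⟩
            · rfl
            · exact absurd hcz (by omega)
          · rintro rfl; exact ⟨Or.inl rfl, rfl⟩
        rw [hZ1, hZ2]
        have : setDist M {w2} ({w1} : Set _) = (mdist M w2 w1 : ℕ∞) := by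
          simp [setDist]
        rw [this, hmd']
  exact ⟨hcat, hmon, le_antisymm hadjUB hadjLB⟩

end LF
end

section
/- Let M be a reduced torsion-free proper length-factorial monoid of finite rank r. Then M has exactly r + 1 atoms. -/
open Multiset

namespace LF

variable (M : Type*) [CancelCommMonoid M]

/-- A family `g` of elements of `M` is integrally independent: since the cancellative monoid
`M` embeds in its Grothendieck group `gp(M)`, a `ℤ`-linear relation among the `g i` in
`gp(M)`, split into positive part `p` and negative part `q`, amounts to an equality of
products `∏ gᵢ ^ pᵢ = ∏ gᵢ ^ qᵢ` in `M`.  The rank of `M` (the dimension of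
`ℚ ⊗_ℤ gp(M)`) is the supremum of the sizes of integrally independent families in `M`. -/
def IndepFamily {n : ℕ} (g : Fin n → M) : Prop :=
  ∀ p q : Fin n → ℕ, (∏ i, g i ^ p i) = (∏ i, g i ^ q i) → p = q

/-- `M` is torsion-free. -/
def TorsionFree : Prop := ∀ (n : ℕ) (x y : M), 0 < n → x ^ n = y ^ n → x = y

/-! ### Auxiliary material for the proof of Statement 11 -/

section Aux

/-- The type of atoms of `M`. -/
abbrev AtomT := {a : M // Irreducible a}

/-- Evaluation of an exponent vector on atoms as a product in `M`. -/
noncomputable def piF (f : AtomT M →₀ ℕ) : M :=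
  f.prod fun a n => (a : M) ^ n

lemma piF_zero : piF M 0 = 1 :=
  Finsupp.prod_zero_index

lemma piF_add (f g : AtomT M →₀ ℕ) : piF M (f + g) = piF M f * piF M g :=
  Finsupp.prod_add_index' (fun _ => pow_zero _) (fun _ m n => pow_add _ m n)

lemma piF_single (a : AtomT M) (n : ℕ) : piF M (Finsupp.single a n) = (a : M) ^ n :=
  Finsupp.prod_single_index (pow_zero _)

lemma piF_sum {ι : Type*} (s : Finset ι) (f : ι → (AtomT M →₀ ℕ)) :
    piF M (∑ i ∈ s, f i) = ∏ i ∈ s, piF M (f i) := by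
  classical
  induction s using Finset.induction_on with
  | empty => simp [piF_zero]
  | @insert _ _ h ih => rw [Finset.sum_insert h, Finset.prod_insert h, piF_add, ih]

lemma piF_nsmul (n : ℕ) (f : AtomT M →₀ ℕ) : piF M (n • f) = piF M f ^ n := by
  induction n with
  | zero => simp [piF_zero]
  | succ k ih => rw [succ_nsmul, piF_add, ih, pow_succ]

lemma piF_toMultiset (f : AtomT M →₀ ℕ) :
    piF M f = ((Finsupp.toMultiset f).map Subtype.val).prod := by
  induction f using Finsupp.induction with
  | zero => simp [piF_zero]
  | single_add a b f _ _ ih =>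
      rw [piF_add, _root_.map_add, Multiset.map_add, Multiset.prod_add, ih, piF_single,
        Finsupp.toMultiset_single, Multiset.nsmul_singleton, Multiset.map_replicate,
        Multiset.prod_replicate]

/-- The inclusion of natural exponent vectors into integral ones. -/
noncomputable def iotaF : (AtomT M →₀ ℕ) →+ (AtomT M →₀ ℤ) :=
  Finsupp.mapRange.addMonoidHom (Nat.castAddMonoidHom ℤ)

lemma iotaF_apply (f : AtomT M →₀ ℕ) (a : AtomT M) : iotaF M f a = (f a : ℤ) := rfl

lemma iotaF_injective : Function.Injective (iotaF M) := by
  intro f g h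
  ext a
  have := congrArg (fun v => v a) h
  simp only [iotaF_apply] at this
  exact_mod_cast this

/-- The total length (sum of coordinates) of an integral exponent vector. -/
noncomputable def sigF : (AtomT M →₀ ℤ) →+ ℤ :=
  Finsupp.liftAddHom fun _ => AddMonoidHom.id ℤ

lemma sigF_apply (v : AtomT M →₀ ℤ) : sigF M v = v.sum fun _ m => m := rfl

lemma sigF_iotaF (p : AtomT M →₀ ℕ) :
    sigF M (iotaF M p) = ((Finsupp.toMultiset p).card : ℤ) := by
  have h0 : iotaF M p = Finsupp.mapRange (fun n : ℕ => (n : ℤ)) Nat.cast_zero p := rfl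
  rw [sigF_apply, Finsupp.card_toMultiset, h0,
    Finsupp.sum_mapRange_index (fun _ => rfl)]
  simp only [Finsupp.sum, Function.id_def]
  push_cast
  rfl

/-- The lattice of factorization relations of `M`. -/
noncomputable def Kgrp : AddSubgroup (AtomT M →₀ ℤ) where
  carrier := {v | ∃ p q : AtomT M →₀ ℕ, v = iotaF M p - iotaF M q ∧ piF M p = piF M q}
  zero_mem' := ⟨0, 0, by simp, rfl⟩
  add_mem' := by
    rintro x y ⟨p1, q1, rfl, h1⟩ ⟨p2, q2, rfl, h2⟩
    refine ⟨p1 + p2, q1 + q2, ?_, ?_⟩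
    · rw [_root_.map_add, _root_.map_add]; abel
    · rw [piF_add, piF_add, h1, h2]
  neg_mem' := by
    rintro x ⟨p, q, rfl, h⟩
    exact ⟨q, p, by rw [neg_sub], h.symm⟩

lemma mem_Kgrp {v : AtomT M →₀ ℤ} :
    v ∈ Kgrp M ↔ ∃ p q : AtomT M →₀ ℕ, v = iotaF M p - iotaF M q ∧ piF M p = piF M q :=
  Iff.rfl

lemma toMultiset_inj {α : Type*} : Function.Injective (Finsupp.toMultiset (α := α)) := by
  classical
  intro f g h
  have h2 := congrArg Multiset.toFinsupp h
  rwa [← Multiset.toFinsupp_symm_apply, ← Multiset.toFinsupp_symm_apply,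
    Multiset.toFinsupp.apply_symm_apply, Multiset.toFinsupp.apply_symm_apply] at h2

end Aux

/-- A reduced torsion-free proper length-factorial monoid of finite rank `r`
has exactly `r + 1` atoms. -/
theorem stmt11 (r : ℕ)
    (hred : ∀ u : M, IsUnit u → u = 1) (htf : TorsionFree M)
    (hat : Atomic M) (hlf : LengthFactorial M) (hnf : ¬ Factorial M)
    (hrank : (∃ g : Fin r → M, IndepFamily M g) ∧
      ∀ g : Fin (r + 1) → M, ¬ IndepFamily M g) :
    Nat.card {a : M // Irreducible a} = r + 1 := by
  classical
  obtain ⟨hrank1, hrank2⟩ := hrank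
  -- `Associates.mk` is injective since `M` is reduced
  have mkinj : Function.Injective (Associates.mk : M → Associates M) := by
    intro a b h
    obtain ⟨u, hu⟩ := Associates.mk_eq_mk_iff_associated.mp h
    rw [hred (↑u) u.isUnit, mul_one] at hu
    exact hu
  have irrmk : ∀ a : M, Irreducible (Associates.mk a) ↔ Irreducible a := by
    intro a
    constructor
    · rintro ⟨h1, h2⟩
      refine ⟨fun h => h1 (Associates.isUnit_mk.mpr h), ?_⟩
      intro x y hxy
      rcases @h2 (Associates.mk x) (Associates.mk y)
          (by rw [hxy, Associates.mk_mul_mk]) with h | h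
      · exact Or.inl (Associates.isUnit_mk.mp h)
      · exact Or.inr (Associates.isUnit_mk.mp h)
    · rintro ⟨h1, h2⟩
      refine ⟨fun h => h1 (Associates.isUnit_mk.mp h), ?_⟩
      intro u v huv
      obtain ⟨x, rfl⟩ := Associates.mk_surjective u
      obtain ⟨y, rfl⟩ := Associates.mk_surjective v
      rw [Associates.mk_mul_mk] at huv
      rcases @h2 x y (mkinj huv) with h | h
      · exact Or.inl (Associates.isUnit_mk.mpr h)
      · exact Or.inr (Associates.isUnit_mk.mpr h)
  have prodmk : ∀ t : Multiset M, (t.map Associates.mk).prod = Associates.mk t.prod := by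
    intro t
    induction t using Multiset.induction with
    | empty => simp
    | cons a s ih =>
        rw [Multiset.map_cons, Multiset.prod_cons, Multiset.prod_cons, ih,
          Associates.mk_mul_mk]
  -- pulling multisets of atoms of `Associates M` back to `M`
  have pull : ∀ s : Multiset (Associates M), (∀ b ∈ s, Irreducible b) →
      ∃ t : Multiset M, (∀ a ∈ t, Irreducible a) ∧ t.map Associates.mk = s := by
    intro s hs
    obtain ⟨f, hf⟩ := (Associates.mk_surjective (M := M)).hasRightInverse
    refine ⟨s.map f, ?_, ?_⟩
    · intro a ha
      obtain ⟨b, hb, rfl⟩ := Multiset.mem_map.mp ha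
      have hib : Irreducible (Associates.mk (f b)) := by rw [hf b]; exact hs b hb
      exact (irrmk _).mp hib
    · rw [Multiset.map_map]
      calc s.map (Associates.mk ∘ f) = s.map id := Multiset.map_congr rfl fun b _ => hf b
      _ = s := s.map_id
  -- lifting multisets of irreducibles of `M` to multisets of `AtomT M`
  have lift : ∀ (t : Multiset M), (∀ a ∈ t, Irreducible a) →
      ∃ u : Multiset (AtomT M), u.map Subtype.val = t := by
    intro t ht
    refine ⟨t.attach.map fun x => (⟨x.1, ht x.1 x.2⟩ : AtomT M), ?_⟩
    rw [Multiset.map_map]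
    exact Multiset.attach_map_val t
  -- length-factoriality transported to `M`
  have L2 : ∀ t1 t2 : Multiset M, (∀ a ∈ t1, Irreducible a) → (∀ a ∈ t2, Irreducible a) →
      t1.prod = t2.prod → card t1 = card t2 → t1 = t2 := by
    intro t1 t2 h1 h2 hp hc
    have m1 : t1.map Associates.mk ∈ FactorsOf M t1.prod := by
      refine ⟨?_, prodmk t1⟩
      intro b hb; obtain ⟨a, ha, rfl⟩ := Multiset.mem_map.mp hb
      exact (irrmk _).mpr (h1 a ha)
    have m2 : t2.map Associates.mk ∈ FactorsOf M t1.prod := by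
      refine ⟨?_, by rw [prodmk t2, hp]⟩
      intro b hb; obtain ⟨a, ha, rfl⟩ := Multiset.mem_map.mp hb
      exact (irrmk _).mpr (h2 a ha)
    have := hlf t1.prod _ m1 _ m2 (by simpa using hc)
    exact Multiset.map_injective mkinj this
  -- atomicity transported to `M`
  have L1 : ∀ x : M, ¬ IsUnit x → ∃ t : Multiset M, (∀ a ∈ t, Irreducible a) ∧ t.prod = x := by
    intro x hx
    obtain ⟨s, hs1, hs2⟩ := hat x hx
    obtain ⟨t, ht, hmap⟩ := pull s hs1
    refine ⟨t, ht, mkinj ?_⟩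
    rw [← prodmk t, hmap, hs2]
  -- non-factoriality transported to `M`
  have L3 : ∃ t1 t2 : Multiset M, (∀ a ∈ t1, Irreducible a) ∧ (∀ a ∈ t2, Irreducible a) ∧
      t1.prod = t2.prod ∧ t1 ≠ t2 := by
    rw [Factorial, not_forall] at hnf
    obtain ⟨x, hx⟩ := hnf
    by_cases hu : IsUnit x
    · exfalso
      apply hx
      refine ⟨0, ⟨by simp, by rw [Multiset.prod_zero]; exact (Associates.mk_eq_one.mpr hu).symm⟩, ?_⟩
      rintro s ⟨hsa, hsb⟩
      by_contra hne
      obtain ⟨b, hb⟩ := Multiset.exists_mem_of_ne_zero hne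
      have hone : s.prod = 1 := by rw [hsb]; exact Associates.mk_eq_one.mpr hu
      rw [← Multiset.cons_erase hb, Multiset.prod_cons] at hone
      exact (hsa b hb).not_isUnit (IsUnit.of_mul_eq_one _ hone)
    · obtain ⟨s1, hs1⟩ := hat x hu
      have hex : ∃ s2 ∈ FactorsOf M x, s2 ≠ s1 := by
        by_contra hno
        push_neg at hno
        exact hx ⟨s1, hs1, hno⟩
      obtain ⟨s2, hs2, hne⟩ := hex
      obtain ⟨hs1a, hs1b⟩ := hs1
      obtain ⟨hs2a, hs2b⟩ := hs2
      obtain ⟨t1, ht1, hm1⟩ := pull s1 hs1a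
      obtain ⟨t2, ht2, hm2⟩ := pull s2 hs2a
      refine ⟨t1, t2, ht1, ht2, mkinj ?_, ?_⟩
      · rw [← prodmk t1, ← prodmk t2, hm1, hm2, hs1b, hs2b]
      · intro h
        apply hne
        rw [← hm1, ← hm2, h]
  -- a relation of total length zero is trivial
  have K_sig_zero : ∀ v ∈ Kgrp M, sigF M v = 0 → v = 0 := by
    rintro v ⟨p, q, rfl, hpq⟩ hs
    rw [_root_.map_sub, sub_eq_zero] at hs
    rw [sigF_iotaF, sigF_iotaF] at hs
    have hcard : (Finsupp.toMultiset p).card = (Finsupp.toMultiset q).card := by exact_mod_cast hs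
    have hirr : ∀ (f : AtomT M →₀ ℕ) (a : M),
        a ∈ (Finsupp.toMultiset f).map Subtype.val → Irreducible a := by
      intro f a ha
      obtain ⟨b, _, rfl⟩ := Multiset.mem_map.mp ha
      exact b.2
    have hmeq := L2 _ _ (hirr p) (hirr q)
      (by rw [← piF_toMultiset, ← piF_toMultiset]; exact hpq) (by simpa using hcard)
    have h1 : Finsupp.toMultiset p = Finsupp.toMultiset q :=
      Multiset.map_injective (fun _ _ h => Subtype.ext h) hmeq
    rw [toMultiset_inj h1, sub_self]
  -- a nontrivial relation exists
  have KNe : ∃ v ∈ Kgrp M, v ≠ 0 := by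
    obtain ⟨t1, t2, ht1, ht2, hp, hne⟩ := L3
    obtain ⟨u1, hu1⟩ := lift t1 ht1
    obtain ⟨u2, hu2⟩ := lift t2 ht2
    have hf1 : Finsupp.toMultiset (Multiset.toFinsupp u1) = u1 := Multiset.toFinsupp_toMultiset u1
    have hf2 : Finsupp.toMultiset (Multiset.toFinsupp u2) = u2 := Multiset.toFinsupp_toMultiset u2
    refine ⟨iotaF M (Multiset.toFinsupp u1) - iotaF M (Multiset.toFinsupp u2),
      ⟨Multiset.toFinsupp u1, Multiset.toFinsupp u2, rfl, ?_⟩, ?_⟩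
    · rw [piF_toMultiset, piF_toMultiset, hf1, hf2, hu1, hu2]; exact hp
    · intro h0
      apply hne
      rw [sub_eq_zero] at h0
      have h1 := iotaF_injective M h0
      rw [← hu1, ← hu2, ← hf1, ← hf2, h1]
  -- the relation lattice is cyclic, generated by `k0`
  obtain ⟨g0, hg0⟩ := Int.subgroup_cyclic ((Kgrp M).map (sigF M))
  have hg0mem : g0 ∈ AddSubgroup.map (sigF M) (Kgrp M) := by
    rw [hg0]; exact AddSubgroup.mem_closure_singleton_self g0
  obtain ⟨k0, hk0K, hk0σ⟩ := hg0mem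
  have hmul : ∀ v ∈ Kgrp M, ∃ m : ℤ, v = m • k0 := by
    intro v hv
    have hσv : sigF M v ∈ AddSubgroup.map (sigF M) (Kgrp M) :=
      AddSubgroup.mem_map_of_mem _ hv
    rw [hg0, AddSubgroup.mem_closure_singleton] at hσv
    obtain ⟨m, hm⟩ := hσv
    refine ⟨m, ?_⟩
    have hw : v - m • k0 ∈ Kgrp M := sub_mem hv (AddSubgroup.zsmul_mem _ hk0K m)
    have hσw : sigF M (v - m • k0) = 0 := by
      rw [_root_.map_sub, _root_.map_zsmul, hk0σ, hm, sub_self]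
    have := K_sig_zero _ hw hσw
    rwa [sub_eq_zero] at this
  have hk0ne : k0 ≠ 0 := by
    obtain ⟨v, hv, hvne⟩ := KNe
    obtain ⟨m, hm⟩ := hmul v hv
    intro h; rw [h, smul_zero] at hm; exact hvne hm
  obtain ⟨a0, ha0⟩ : ∃ a0, k0 a0 ≠ 0 := by
    by_contra h; push_neg at h; exact hk0ne (Finsupp.ext h)
  -- atoms avoiding `a0` form independent families
  have indep : ∀ (n : ℕ) (h : Fin n → AtomT M), Function.Injective h → (∀ i, h i ≠ a0) →
      IndepFamily M (fun i => ((h i : M))) := by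
    intro n h hinjf hnea p q hpq
    have hPp : ∀ c : Fin n → ℕ, piF M (∑ i, Finsupp.single (h i) (c i)) = ∏ i, (h i : M) ^ c i := by
      intro c
      rw [piF_sum]
      exact Finset.prod_congr rfl fun i _ => piF_single M _ _
    have hmem : iotaF M (∑ i, Finsupp.single (h i) (p i)) -
        iotaF M (∑ i, Finsupp.single (h i) (q i)) ∈ Kgrp M :=
      ⟨_, _, rfl, by rw [hPp p, hPp q]; exact hpq⟩
    obtain ⟨m, hm⟩ := hmul _ hmem
    have happ : ∀ (c : Fin n → ℕ), (∑ i, Finsupp.single (h i) (c i)) a0 = 0 := by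
      intro c
      rw [Finsupp.finset_sum_apply]
      exact Finset.sum_eq_zero fun i _ => Finsupp.single_eq_of_ne (hnea i).symm
    have h0 : (iotaF M (∑ i, Finsupp.single (h i) (p i)) -
        iotaF M (∑ i, Finsupp.single (h i) (q i))) a0 = 0 := by
      rw [Finsupp.sub_apply, iotaF_apply, iotaF_apply, happ p, happ q]
      simp
    have hm0 : m = 0 := by
      rw [hm, Finsupp.smul_apply, smul_eq_mul] at h0
      rcases mul_eq_zero.mp h0 with h' | h'
      · exact h'
      · exact absurd h' ha0
    have hPQ : (∑ i, Finsupp.single (h i) (p i)) = ∑ i, Finsupp.single (h i) (q i) := by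
      rw [hm0, zero_smul, sub_eq_zero] at hm
      exact iotaF_injective M hm
    funext i
    have hap : ∀ c : Fin n → ℕ, (∑ j, Finsupp.single (h j) (c j)) (h i) = c i := by
      intro c
      rw [Finsupp.finset_sum_apply, Finset.sum_eq_single i]
      · rw [Finsupp.single_eq_same]
      · intro j _ hji
        exact Finsupp.single_eq_of_ne (fun hc => hji (hinjf hc.symm))
      · intro habs; exact absurd (Finset.mem_univ i) habs
    have := congrArg (fun v => v (h i)) hPQ
    simpa [hap p, hap q] using this
  -- there are finitely many atoms
  have hfin : Finite (AtomT M) := by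
    by_contra hinf
    rw [not_finite_iff_infinite] at hinf
    have : Infinite ({a0}ᶜ : Set (AtomT M)) :=
      Set.infinite_coe_iff.mpr (Set.Finite.infinite_compl (Set.finite_singleton a0))
    let e : Fin (r + 1) ↪ ({a0}ᶜ : Set (AtomT M)) :=
      (Fin.valEmbedding).trans (Infinite.natEmbedding _)
    refine hrank2 (fun i => ((e i : AtomT M) : M))
      (indep (r + 1) (fun i => (e i : AtomT M)) ?_ ?_)
    · intro i j hij; exact e.injective (Subtype.ext hij)
    · intro i
      have h2 := (e i).2
      simp only [Set.mem_compl_iff, Set.mem_singleton_iff] at h2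
      exact h2
  haveI := hfin
  haveI : Fintype (AtomT M) := Fintype.ofFinite _
  -- upper bound : at most r + 1 atoms
  have hub : Fintype.card (AtomT M) ≤ r + 1 := by
    by_contra hgt
    push_neg at hgt
    have hcc : Fintype.card {b : AtomT M // b ≠ a0} = Fintype.card (AtomT M) - 1 := by
      have h1 : Fintype.card {b : AtomT M // ¬ b = a0} =
          Fintype.card (AtomT M) - Fintype.card {b : AtomT M // b = a0} :=
        Fintype.card_subtype_compl _
      rw [Fintype.card_subtype_eq a0] at h1
      exact h1
    have hcs : r + 1 ≤ Fintype.card {b : AtomT M // b ≠ a0} := by omega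
    obtain ⟨e⟩ : Nonempty (Fin (r + 1) ↪ {b : AtomT M // b ≠ a0}) :=
      Function.Embedding.nonempty_of_card_le (by simpa using hcs)
    exact hrank2 (fun i => ((e i : AtomT M) : M))
      (indep (r + 1) (fun i => (e i : AtomT M))
        (fun i j hij => e.injective (Subtype.ext hij)) (fun i => (e i).2))
  -- lower bound : any family of size ≥ #atoms is dependent
  have dep : ∀ (m : ℕ), Fintype.card (AtomT M) ≤ m → ∀ g : Fin m → M, ¬ IndepFamily M g := by
    intro m hm g hgind
    have hw : ∀ i, ∃ w : AtomT M →₀ ℕ, piF M w = g i := by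
      intro i
      by_cases hu : IsUnit (g i)
      · exact ⟨0, by rw [piF_zero]; exact (hred _ hu).symm⟩
      · obtain ⟨t, ht, htp⟩ := L1 _ hu
        obtain ⟨u, hu'⟩ := lift t ht
        refine ⟨Multiset.toFinsupp u, ?_⟩
        rw [piF_toMultiset, Multiset.toFinsupp_toMultiset, hu', htp]
    choose w hwspec using hw
    have hnli : ¬ LinearIndependent ℤ
        (Fin.snoc (fun i => iotaF M (w i)) k0 : Fin (m + 1) → (AtomT M →₀ ℤ)) := by
      intro hli
      have hle := hli.fintype_card_le_finrank
      rw [Module.finrank_finsupp_self, Fintype.card_fin] at hle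
      omega
    rw [Fintype.not_linearIndependent_iff] at hnli
    obtain ⟨c, hc0, ⟨i0, hi0⟩⟩ := hnli
    rw [Fin.sum_univ_castSucc] at hc0
    simp only [Fin.snoc_castSucc, Fin.snoc_last] at hc0
    have hcne : ∃ i : Fin m, c i.castSucc ≠ 0 := by
      by_contra hall
      push_neg at hall
      have h1 : c (Fin.last m) • k0 = 0 := by
        rw [Finset.sum_eq_zero (fun i _ => by rw [hall i, zero_smul]), zero_add] at hc0
        exact hc0
      have hlam : c (Fin.last m) ≠ 0 := by
        rcases Fin.eq_castSucc_or_eq_last i0 with ⟨j, rfl⟩ | rfl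
        · exact absurd (hall j) hi0
        · exact hi0
      have h2 := congrArg (fun v => v a0) h1
      simp only [Finsupp.smul_apply, smul_eq_mul, Finsupp.coe_zero, Pi.zero_apply] at h2
      rcases mul_eq_zero.mp h2 with h' | h'
      · exact hlam h'
      · exact ha0 h'
    obtain ⟨i1, hi1⟩ := hcne
    have key : iotaF M (∑ i, (c i.castSucc).toNat • w i) -
        iotaF M (∑ i, (-(c i.castSucc)).toNat • w i) = (-(c (Fin.last m))) • k0 := by
      rw [_root_.map_sum, _root_.map_sum, ← Finset.sum_sub_distrib]
      have hterm : ∀ i : Fin m, iotaF M ((c i.castSucc).toNat • w i) -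
          iotaF M ((-(c i.castSucc)).toNat • w i) = c i.castSucc • iotaF M (w i) := by
        intro i
        rw [AddMonoidHom.map_nsmul, AddMonoidHom.map_nsmul, ← natCast_zsmul, ← natCast_zsmul,
          ← sub_smul]
        congr 1
        omega
      rw [Finset.sum_congr rfl (fun i _ => hterm i), neg_smul]
      exact eq_neg_of_add_eq_zero_left hc0
    have hKm : iotaF M (∑ i, (c i.castSucc).toNat • w i) -
        iotaF M (∑ i, (-(c i.castSucc)).toNat • w i) ∈ Kgrp M := by
      rw [key]; exact AddSubgroup.zsmul_mem _ hk0K _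
    obtain ⟨p', q', heq, hpq'⟩ := hKm
    have hPQ : piF M (∑ i, (c i.castSucc).toNat • w i) =
        piF M (∑ i, (-(c i.castSucc)).toNat • w i) := by
      have h2 := sub_eq_sub_iff_add_eq_add.mp heq
      rw [← _root_.map_add, ← _root_.map_add] at h2
      have h3 := iotaF_injective M h2
      have h4 : piF M ((∑ i, (c i.castSucc).toNat • w i) + q') =
          piF M (p' + (∑ i, (-(c i.castSucc)).toNat • w i)) := by rw [h3]
      rw [piF_add, piF_add, hpq', mul_comm (piF M q')] at h4
      exact mul_right_cancel h4
    have hprodeq : (∏ i, g i ^ (fun i => (c i.castSucc).toNat) i) =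
        ∏ i, g i ^ (fun i => (-(c i.castSucc)).toNat) i := by
      have e1 : ∏ i, g i ^ (c i.castSucc).toNat = piF M (∑ i, (c i.castSucc).toNat • w i) := by
        rw [piF_sum]
        exact Finset.prod_congr rfl fun i _ => by rw [piF_nsmul, hwspec i]
      have e2 : ∏ i, g i ^ (-(c i.castSucc)).toNat =
          piF M (∑ i, (-(c i.castSucc)).toNat • w i) := by
        rw [piF_sum]
        exact Finset.prod_congr rfl fun i _ => by rw [piF_nsmul, hwspec i]
      simpa only [e1, e2] using hPQ
    have hfinal := hgind _ _ hprodeq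
    have := congrFun hfinal i1
    omega
  have hlb : r + 1 ≤ Fintype.card (AtomT M) := by
    by_contra hlt
    push_neg at hlt
    obtain ⟨g, hg⟩ := hrank1
    exact dep r (by omega) g hg
  rw [Nat.card_eq_fintype_card]
  exact le_antisymm hub hlb

end LF
end
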